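/- arXiv:2502.07426 — 3 statements merged into one kernel-verified Lean document; each statement's English description precedes it below -/
import Mathlib

section
/- Let (T,ℓ) be a rooted binary phylogenetic X-tree with |X| = n. Then the set P(T,ℓ) = {(φ(x_1),…,φ(x_n)) : φ is a diversity index of (T,ℓ)} is a polytope in ℝ^n (a bounded intersection of finitely many closed half-spaces), and for every x ∈ X there exist non-negative real numbers LB(x,T) and UB(x,T) such that LB(x,T) ≤ φ(x) ≤ UB(x,T) for every diversity index φ of (T,ℓ). -/
open scoped Classical

/-- Data of a rooted tree: a finite vertex set, a root, and a parent map
(edges are directed away from the root; the parent of the root is the root itself). -/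
structure PreTree (V : Type*) where
  verts : Finset V
  root : V
  par : V → V

namespace PreTree

variable {V : Type*}

/-- `T` is a well-formed rooted tree. -/
def IsTree (T : PreTree V) : Prop :=
  T.root ∈ T.verts ∧ (∀ v ∈ T.verts, T.par v ∈ T.verts) ∧ T.par T.root = T.root ∧
    ∀ v ∈ T.verts, ∃ n : ℕ, T.par^[n] v = T.root

/-- The edges of `T`, identified with their head (the endpoint further from the root):
every non-root vertex `v` yields the edge `(par v, v)`. -/
noncomputable def edges (T : PreTree V) : Finset V := T.verts.erase T.root

/-- The children of a vertex `v`. -/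
noncomputable def children (T : PreTree V) (v : V) : Finset V :=
  T.verts.filter fun w => w ≠ T.root ∧ T.par w = v

/-- The leaves (taxa) of `T`: vertices of out-degree `0`. -/
noncomputable def leaves (T : PreTree V) : Finset V :=
  T.verts.filter fun v => T.children v = ∅

/-- `T` is a rooted binary `X`-tree: a rooted tree in which the root has out-degree `2`
and every other vertex has out-degree `0` (a leaf) or `2`. -/
def IsBinaryTree (T : PreTree V) : Prop :=
  T.IsTree ∧ (∀ v ∈ T.verts, (T.children v).card = 0 ∨ (T.children v).card = 2) ∧
    (T.children T.root).card = 2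

/-- `x` lies (weakly) below `v`, i.e. `v` is on the directed path from the root to `x`. -/
def below (T : PreTree V) (x v : V) : Prop := ∃ n : ℕ, T.par^[n] x = v

/-- The leaf set `X[v]` of the pendant subtree `T[v]`. -/
noncomputable def clade (T : PreTree V) (v : V) : Finset V :=
  T.leaves.filter fun x => T.below x v

/-- The phylogenetic diversity of `Y ⊆ X`: the total length of the edges of the
minimal subtree of `T` connecting the root to all leaves in `Y`. -/
noncomputable def PD (T : PreTree V) (ℓ : V → ℝ) (Y : Finset V) : ℝ :=
  ∑ e ∈ T.edges.filter (fun e => ∃ x ∈ Y, T.below x e), ℓ e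

/-- The diversity-index score `φ(x) = ∑_{e ∈ E(T)} γ(x,e)·ℓ(e)`. -/
noncomputable def score (T : PreTree V) (ℓ : V → ℝ) (γ : V → V → ℝ) (x : V) : ℝ :=
  ∑ e ∈ T.edges, γ x e * ℓ e

/-- The vertex set of the pendant subtree `T[v]`. -/
noncomputable def desc (T : PreTree V) (v : V) : Finset V :=
  T.verts.filter fun w => T.below w v

/-- An isomorphism of tree shapes from the pendant subtree `T[v₁]` to `T[v₂]`. -/
def IsShapeIso (T : PreTree V) (v₁ v₂ : V) (f : V → V) : Prop :=
  f v₁ = v₂ ∧ Set.BijOn f (T.desc v₁ : Set V) ((T.desc v₂ : Set V)) ∧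
    ∀ w ∈ T.desc v₁, w ≠ v₁ → f (T.par w) = T.par (f w)

/-- `γ` are the coefficients of a diversity index of `(T, ℓ)`: they are non-negative and
satisfy descent, neutrality and convexity. -/
def IsDivIndex (T : PreTree V) (ℓ : V → ℝ) (γ : V → V → ℝ) : Prop :=
  (∀ x e, 0 ≤ γ x e) ∧
  (∀ x : V, ∀ e ∈ T.edges, x ∉ T.clade e → γ x e = 0) ∧
  (∀ e₁ ∈ T.edges, ∀ e₂ ∈ T.edges, ∀ f : V → V, T.IsShapeIso e₁ e₂ f →
      ∀ x ∈ T.clade e₁, γ x e₁ = γ (f x) e₂) ∧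
  (∑ x ∈ T.leaves, T.score ℓ γ x = T.PD ℓ T.leaves)

/-- The allocation property: each edge distributes exactly its own length,
`∑_{x ∈ X[v]} γ(x,(u,v)) = 1` for every edge `(u,v)`. -/
def Allocation (T : PreTree V) (γ : V → V → ℝ) : Prop :=
  ∀ e ∈ T.edges, ∑ x ∈ T.clade e, γ x e = 1

/-- The set `P(T,ℓ)` of score vectors of the diversity indices of `(T,ℓ)`, viewed in the
euclidean space `ℝ^X` indexed by the taxa. -/
noncomputable def indexScores (T : PreTree V) (ℓ : V → ℝ) : Set ((↥T.leaves) → ℝ) :=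
  {s | ∃ γ : V → V → ℝ, T.IsDivIndex ℓ γ ∧ ∀ x : ↥T.leaves, s x = T.score ℓ γ (x : V)}

end PreTree


noncomputable section FMsec
variable {β : Type*} [Fintype β]

/-- A finite intersection of closed half-spaces (with the indexing by `Fin m`). -/
def IsPolyhedron (P : Set (β → ℝ)) : Prop :=
  ∃ (m : ℕ) (a : Fin m → (β → ℝ)) (b : Fin m → ℝ),
    P = ⋂ i : Fin m, {z : β → ℝ | ∑ x, a i x * z x ≤ b i}

lemma isPolyhedron_of_fintype {ι : Type*} [Fintype ι] (a : ι → β → ℝ) (b : ι → ℝ) :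
    IsPolyhedron (⋂ i : ι, {z : β → ℝ | ∑ x, a i x * z x ≤ b i}) := by
  classical
  let e := (Fintype.equivFin ι).symm
  refine ⟨Fintype.card ι, fun i => a (e i), fun i => b (e i), ?_⟩
  exact (e.surjective.iInter_comp fun i => {z : β → ℝ | ∑ x, a i x * z x ≤ b i}).symm

lemma isPolyhedron_univ : IsPolyhedron (Set.univ : Set (β → ℝ)) := by
  refine ⟨0, fun i => 0, fun i => 0, ?_⟩
  simp

lemma IsPolyhedron.inter {P Q : Set (β → ℝ)} (hP : IsPolyhedron P) (hQ : IsPolyhedron Q) :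
    IsPolyhedron (P ∩ Q) := by
  obtain ⟨m, a, b, rfl⟩ := hP
  obtain ⟨m', a', b', rfl⟩ := hQ
  have := isPolyhedron_of_fintype (β := β) (Sum.elim a a') (Sum.elim b b')
  rwa [Set.iInter_sum] at this

lemma isPolyhedron_iInter {ι : Type*} [Fintype ι] {P : ι → Set (β → ℝ)}
    (h : ∀ i, IsPolyhedron (P i)) : IsPolyhedron (⋂ i, P i) := by
  classical
  choose m a b hab using h
  have := isPolyhedron_of_fintype (β := β) (fun p : Σ i, Fin (m i) => a p.1 p.2)
    (fun p : Σ i, Fin (m i) => b p.1 p.2)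
  convert this using 1
  ext z
  simp only [Set.mem_iInter, hab, Sigma.forall]

lemma isPolyhedron_halfspace (a : β → ℝ) (b : ℝ) :
    IsPolyhedron {z : β → ℝ | ∑ x, a x * z x ≤ b} := by
  have := isPolyhedron_of_fintype (β := β) (fun _ : Unit => a) (fun _ : Unit => b)
  rwa [Set.iInter_const] at this

lemma isPolyhedron_eq (a : β → ℝ) (b : ℝ) :
    IsPolyhedron {z : β → ℝ | ∑ x, a x * z x = b} := by
  have h1 := isPolyhedron_halfspace a b
  have h2 := isPolyhedron_halfspace (fun x => -(a x)) (-b)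
  have := h1.inter h2
  convert this using 1
  ext z
  simp only [Set.mem_setOf_eq, Set.mem_inter_iff]
  constructor
  · rintro h; constructor; · exact le_of_eq h
    · simp only [neg_mul, Finset.sum_neg_distrib]; linarith
  · rintro ⟨h1, h2⟩
    simp only [neg_mul, Finset.sum_neg_distrib] at h2
    linarith

end FMsec

noncomputable section FMsec2
variable {β : Type*} [Fintype β]

lemma sum_mul_update (a z : β → ℝ) (k : β) (t : ℝ) :
    ∑ x, a x * Function.update z k t x
      = (∑ x, Function.update a k 0 x * z x) + a k * t := by
  classical
  rw [Finset.sum_eq_add_sum_sdiff_singleton_of_mem (Finset.mem_univ k)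
        (fun x => a x * Function.update z k t x),
      Finset.sum_eq_add_sum_sdiff_singleton_of_mem (Finset.mem_univ k)
        (fun x => Function.update a k 0 x * z x)]
  rw [Function.update_self, Function.update_self]
  have h : ∑ x ∈ Finset.univ \ {k}, a x * Function.update z k t x
      = ∑ x ∈ Finset.univ \ {k}, Function.update a k 0 x * z x :=
    Finset.sum_congr rfl (fun x hx => by
      rw [Finset.mem_sdiff, Finset.mem_singleton] at hx
      rw [Function.update_of_ne hx.2, Function.update_of_ne hx.2])
  rw [h]
  ring

lemma IsPolyhedron.elim_update {P : Set (β → ℝ)} (hP : IsPolyhedron P) (k : β) :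
    IsPolyhedron {z | ∃ t : ℝ, Function.update z k t ∈ P} := by
  classical
  obtain ⟨m, a, b, rfl⟩ := hP
  set A : Fin m → β → ℝ := fun i => Function.update (a i) k 0 with hA
  set c : Fin m ⊕ Fin m × Fin m → β → ℝ := fun s => match s with
    | .inl i => if a i k = 0 then A i else 0
    | .inr (i, j) => if 0 < a i k ∧ a j k < 0 then a i k • A j - a j k • A i else 0
    with hc
  set d : Fin m ⊕ Fin m × Fin m → ℝ := fun s => match s with
    | .inl i => if a i k = 0 then b i else 0
    | .inr (i, j) => if 0 < a i k ∧ a j k < 0 then a i k * b j - a j k * b i else 0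
    with hd
  have key : {z | ∃ t : ℝ, Function.update z k t ∈
        ⋂ i, {z : β → ℝ | ∑ x, a i x * z x ≤ b i}}
      = ⋂ s, {z : β → ℝ | ∑ x, c s x * z x ≤ d s} := by
    ext z
    simp only [Set.mem_setOf_eq, Set.mem_iInter]
    constructor
    · rintro ⟨t, ht⟩ s
      have hi : ∀ i, (∑ x, A i x * z x) + a i k * t ≤ b i := by
        intro i
        have h := ht i
        rwa [sum_mul_update] at h
      match s with
      | .inl i =>
        by_cases h : a i k = 0
        · simp only [hc, hd, if_pos h]
          have := hi i
          rw [h] at this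
          simpa using this
        · simp only [hc, hd, if_neg h]
          simp
      | .inr (i, j) =>
        by_cases h : 0 < a i k ∧ a j k < 0
        · simp only [hc, hd, if_pos h]
          have h1 := hi i
          have h2 := hi j
          have expand : ∑ x, (a i k • A j - a j k • A i) x * z x
              = a i k * (∑ x, A j x * z x) - a j k * (∑ x, A i x * z x) := by
            simp only [Pi.sub_apply, Pi.smul_apply, smul_eq_mul, sub_mul,
              Finset.sum_sub_distrib, Finset.mul_sum, mul_assoc]
          rw [expand]
          nlinarith [h.1, h.2]
        · simp only [hc, hd, if_neg h]
          simp
    · intro hs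
      set S : Fin m → ℝ := fun i => ∑ x, A i x * z x with hS
      have hz0 : ∀ i, a i k = 0 → S i ≤ b i := by
        intro i hik
        have := hs (.inl i)
        simpa only [hc, hd, if_pos hik] using this
      have hpair : ∀ i j, 0 < a i k → a j k < 0 →
          a i k * S j - a j k * S i ≤ a i k * b j - a j k * b i := by
        intro i j hi hj
        have := hs (.inr (i, j))
        simp only [hc, hd, if_pos (And.intro hi hj)] at this
        have expand : ∑ x, (a i k • A j - a j k • A i) x * z x
            = a i k * (∑ x, A j x * z x) - a j k * (∑ x, A i x * z x) := by
          simp only [Pi.sub_apply, Pi.smul_apply, smul_eq_mul, sub_mul,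
            Finset.sum_sub_distrib, Finset.mul_sum, mul_assoc]
        rw [expand] at this
        exact this
      -- candidate values
      set U : Finset ℝ := (Finset.univ.filter (fun i => 0 < a i k)).image
        (fun i => (b i - S i) / a i k) with hU
      set D : Finset ℝ := (Finset.univ.filter (fun i => a i k < 0)).image
        (fun i => (b i - S i) / a i k) with hD
      set t : ℝ := if hUn : U.Nonempty then U.min' hUn
        else if hDn : D.Nonempty then D.max' hDn else 0 with hdef
      refine ⟨t, fun i => ?_⟩
      rw [sum_mul_update]
      show S i + a i k * t ≤ b i
      rcases lt_trichotomy (a i k) 0 with hik | hik | hik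
      · -- negative coefficient: need a lower bound on t
        have hiD : (b i - S i) / a i k ∈ D := by
          rw [hD]
          exact Finset.mem_image.2 ⟨i, Finset.mem_filter.2 ⟨Finset.mem_univ _, hik⟩, rfl⟩
        by_cases hUn : U.Nonempty
        · have ht : t = U.min' hUn := by rw [hdef, dif_pos hUn]
          obtain ⟨j, hj, hjt⟩ := Finset.mem_image.1 (U.min'_mem hUn)
          have hjpos : 0 < a j k := (Finset.mem_filter.1 hj).2
          have hjt' : a j k * t = b j - S j := by
            rw [ht, ← hjt, mul_div_cancel₀ _ (ne_of_gt hjpos)]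
          have hcomb := hpair j i hjpos hik
          have h1 : a j k * (a i k * t) = a i k * (b j - S j) := by
            rw [← hjt']; ring
          have h2 : a j k * (a i k * t) ≤ a j k * (b i - S i) := by
            rw [h1]; linarith
          have := le_of_mul_le_mul_left h2 hjpos
          linarith
        · have hDn : D.Nonempty := ⟨_, hiD⟩
          have ht : t = D.max' hDn := by rw [hdef, dif_neg hUn, dif_pos hDn]
          have hle : (b i - S i) / a i k ≤ t := ht ▸ D.le_max' _ hiD
          have := mul_le_mul_of_nonpos_left hle (le_of_lt hik)
          rw [mul_div_cancel₀ _ (ne_of_lt hik)] at this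
          linarith
      · rw [hik]; simpa using hz0 i hik
      · -- positive coefficient: need an upper bound on t
        have hiU : (b i - S i) / a i k ∈ U := by
          rw [hU]
          exact Finset.mem_image.2 ⟨i, Finset.mem_filter.2 ⟨Finset.mem_univ _, hik⟩, rfl⟩
        have hUn : U.Nonempty := ⟨_, hiU⟩
        have ht : t = U.min' hUn := by rw [hdef, dif_pos hUn]
        have hle : t ≤ (b i - S i) / a i k := ht ▸ U.min'_le _ hiU
        have := mul_le_mul_of_nonneg_left hle (le_of_lt hik)
        rw [mul_div_cancel₀ _ (ne_of_gt hik)] at this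
        linarith
  rw [key]
  exact isPolyhedron_of_fintype c d

end FMsec2

noncomputable section FMsec3
variable {β : Type*} [Fintype β]

def elimSet (A : Finset β) (P : Set (β → ℝ)) : Set (β → ℝ) :=
  {z | ∃ w : β → ℝ, (∀ k ∉ A, w k = z k) ∧ w ∈ P}

omit [Fintype β] in
lemma elimSet_empty (P : Set (β → ℝ)) : elimSet ∅ P = P := by
  ext z
  constructor
  · rintro ⟨w, hw, hwP⟩
    have : w = z := funext fun k => hw k (Finset.notMem_empty k)
    rwa [← this]
  · intro hz
    exact ⟨z, fun _ _ => rfl, hz⟩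

omit [Fintype β] in
lemma elimSet_insert (k : β) (A : Finset β) (P : Set (β → ℝ)) :
    elimSet (insert k A) P = {z | ∃ t : ℝ, Function.update z k t ∈ elimSet A P} := by
  classical
  ext z
  constructor
  · rintro ⟨w, hw, hwP⟩
    refine ⟨w k, w, fun k' hk' => ?_, hwP⟩
    by_cases h : k' = k
    · subst h; rw [Function.update_self]
    · rw [Function.update_of_ne h]
      exact hw k' (by simp [h, hk'])
  · rintro ⟨t, w, hw, hwP⟩
    refine ⟨w, fun k' hk' => ?_, hwP⟩
    rw [Finset.mem_insert, not_or] at hk'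
    rw [hw k' hk'.2, Function.update_of_ne hk'.1]

lemma IsPolyhedron.elimSet_poly {P : Set (β → ℝ)} (hP : IsPolyhedron P) (A : Finset β) :
    IsPolyhedron (elimSet A P) := by
  classical
  induction A using Finset.induction_on with
  | empty => rwa [elimSet_empty]
  | @insert k A hk ih =>
      rw [elimSet_insert]
      exact ih.elim_update k

end FMsec3

noncomputable section FMsec4
variable {α γ : Type*} [Fintype α] [Fintype γ]

lemma IsPolyhedron.proj {P : Set ((α ⊕ γ) → ℝ)} (hP : IsPolyhedron P) :
    IsPolyhedron {s : α → ℝ | ∃ w ∈ P, ∀ x, w (Sum.inl x) = s x} := by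
  classical
  set A : Finset (α ⊕ γ) := Finset.univ.image (Sum.inr) with hA
  have hset : {s : α → ℝ | ∃ w ∈ P, ∀ x, w (Sum.inl x) = s x}
      = {s : α → ℝ | Sum.elim s 0 ∈ elimSet A P} := by
    ext s
    simp only [Set.mem_setOf_eq, elimSet]
    constructor
    · rintro ⟨w, hwP, hw⟩
      refine ⟨w, fun k hk => ?_, hwP⟩
      match k with
      | .inl x => exact hw x
      | .inr g => exact absurd (by simp [hA]) hk
    · rintro ⟨w, hw, hwP⟩
      refine ⟨w, hwP, fun x => ?_⟩
      have := hw (Sum.inl x) (by simp [hA])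
      simpa using this
  rw [hset]
  obtain ⟨m, a, b, hab⟩ := hP.elimSet_poly A
  refine ⟨m, fun i x => a i (Sum.inl x), b, ?_⟩
  ext s
  rw [Set.mem_setOf_eq, hab]
  simp only [Set.mem_iInter, Set.mem_setOf_eq]
  apply forall_congr'
  intro i
  rw [Fintype.sum_sum_type]
  simp

end FMsec4

noncomputable section FMsec5
variable {β : Type*} [Fintype β]

lemma isPolyhedron_smul_le (c : β) (r b : ℝ) : IsPolyhedron {z : β → ℝ | r * z c ≤ b} := by
  classical
  have h := isPolyhedron_halfspace (fun k => if k = c then r else 0) b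
  convert h using 1
  ext z
  simp [ite_mul, Finset.sum_ite_eq']

lemma isPolyhedron_coord_nonneg (c : β) : IsPolyhedron {z : β → ℝ | 0 ≤ z c} := by
  have h := isPolyhedron_smul_le c (-1) 0
  convert h using 1
  ext z
  simp only [Set.mem_setOf_eq, neg_one_mul, neg_nonpos]

lemma isPolyhedron_coord_eq_zero (c : β) : IsPolyhedron {z : β → ℝ | z c = 0} := by
  classical
  have h := isPolyhedron_eq (fun k => if k = c then (1:ℝ) else 0) 0
  convert h using 1
  ext z
  simp [ite_mul, Finset.sum_ite_eq']

lemma isPolyhedron_coord_eq (c c' : β) : IsPolyhedron {z : β → ℝ | z c = z c'} := by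
  classical
  have h := isPolyhedron_eq
    (fun k => (if k = c then (1:ℝ) else 0) - (if k = c' then (1:ℝ) else 0)) 0
  convert h using 1
  ext z
  have : ∑ x, ((if x = c then (1:ℝ) else 0) - (if x = c' then (1:ℝ) else 0)) * z x
      = z c - z c' := by
    simp [sub_mul, ite_mul, Finset.sum_sub_distrib, Finset.sum_ite_eq']
  rw [Set.mem_setOf_eq, Set.mem_setOf_eq, this, sub_eq_zero]

lemma isPolyhedron_ite (p : Prop) [Decidable p] {P : Set (β → ℝ)} (hP : IsPolyhedron P) :
    IsPolyhedron (if p then P else Set.univ) := by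
  split
  · exact hP
  · exact isPolyhedron_univ

lemma isPolyhedron_ite' (p : Prop) [Decidable p] {P : Set (β → ℝ)} (hP : IsPolyhedron P) :
    IsPolyhedron (if p then Set.univ else P) := by
  split
  · exact isPolyhedron_univ
  · exact hP

end FMsec5


namespace PreTree

variable {V : Type*} {T : PreTree V}

lemma below_of_par {w u v : V} (hw : T.par w = u) (h : T.below u v) : T.below w v := by
  obtain ⟨n, hn⟩ := h
  exact ⟨n + 1, by rw [Function.iterate_succ_apply, hw, hn]⟩

lemma IsTree.not_cycle (hT : T.IsTree) {v : V} (hv : v ∈ T.verts) (hvr : v ≠ T.root)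
    {n : ℕ} (h : T.par^[n + 1] v = v) : False := by
  obtain ⟨k, hk⟩ := hT.2.2.2 v hv
  have hroot : ∀ j, T.par^[j] T.root = T.root := fun j => Function.iterate_fixed hT.2.2.1 j
  have hper : ∀ m, T.par^[m * (n + 1)] v = v := by
    intro m
    induction m with
    | zero => simp
    | succ m ih =>
        rw [Nat.succ_mul, Function.iterate_add_apply, h]
        exact ih
  have hge : k ≤ k * (n + 1) := Nat.le_mul_of_pos_right k (Nat.succ_pos n)
  have hcyc : T.par^[k * (n + 1)] v = T.root := by
    rw [← Nat.sub_add_cancel hge, Function.iterate_add_apply, hk, hroot]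
  exact hvr (by rw [← hper k, hcyc])

lemma mem_clade {x v : V} : x ∈ T.clade v ↔ x ∈ T.leaves ∧ T.below x v := Finset.mem_filter

lemma mem_desc {w v : V} : w ∈ T.desc v ↔ w ∈ T.verts ∧ T.below w v := Finset.mem_filter

lemma root_not_mem_desc (hT : T.IsTree) {e : V} (he : e ∈ T.edges) : T.root ∉ T.desc e := by
  intro h
  obtain ⟨n, hn⟩ := (mem_desc.1 h).2
  rw [Function.iterate_fixed hT.2.2.1 n] at hn
  exact (Finset.mem_erase.1 he).1 hn.symm

lemma par_mem_desc (hT : T.IsTree) {u e : V} (hu : u ∈ T.desc e) (hne : u ≠ e) :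
    T.par u ∈ T.desc e := by
  obtain ⟨huv, n, hn⟩ := mem_desc.1 hu
  cases n with
  | zero => exact absurd hn hne
  | succ m =>
      rw [Function.iterate_succ_apply] at hn
      exact mem_desc.2 ⟨hT.2.1 u huv, m, hn⟩

lemma IsShapeIso.map_clade (hT : T.IsTree) {e₁ e₂ : V} (he₁ : e₁ ∈ T.edges)
    (he₂ : e₂ ∈ T.edges) {f : V → V} (hf : T.IsShapeIso e₁ e₂ f) {x : V}
    (hx : x ∈ T.clade e₁) : f x ∈ T.clade e₂ := by
  obtain ⟨hfe, hbij, hpar⟩ := hf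
  obtain ⟨hxl, hxb⟩ := mem_clade.1 hx
  have hxv : x ∈ T.verts := (Finset.mem_filter.1 hxl).1
  have hxd : x ∈ T.desc e₁ := mem_desc.2 ⟨hxv, hxb⟩
  have hfxd : f x ∈ T.desc e₂ := by
    have := hbij.mapsTo (by exact_mod_cast hxd : x ∈ (T.desc e₁ : Set V))
    exact_mod_cast this
  have hfxv : f x ∈ T.verts := (mem_desc.1 hfxd).1
  have hfxb : T.below (f x) e₂ := (mem_desc.1 hfxd).2
  have hchild : T.children (f x) = ∅ := by
    rw [Finset.eq_empty_iff_forall_notMem]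
    intro w hw
    obtain ⟨hwv, hwr, hwp⟩ := Finset.mem_filter.1 hw
    have hwd : w ∈ T.desc e₂ := mem_desc.2 ⟨hwv, below_of_par hwp hfxb⟩
    obtain ⟨u, hud', hu⟩ := hbij.surjOn (by exact_mod_cast hwd : w ∈ (T.desc e₂ : Set V))
    have hud : u ∈ T.desc e₁ := by exact_mod_cast hud'
    by_cases hue : u = e₁
    · subst hue
      rw [hfe] at hu
      -- hu : e₂ = w
      obtain ⟨n, hn⟩ := hfxb
      have hcyc : T.par^[n + 1] e₂ = e₂ := by
        rw [Function.iterate_succ_apply]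
        have : T.par e₂ = f x := by rw [hu]; exact hwp
        rw [this, hn]
      exact hT.not_cycle (Finset.mem_erase.1 he₂).2 (Finset.mem_erase.1 he₂).1 hcyc
    · have hpu : f (T.par u) = f x := by
        rw [hpar u hud hue, hu, hwp]
      have hpud : T.par u ∈ T.desc e₁ := par_mem_desc hT hud hue
      have hpux : T.par u = x :=
        hbij.injOn (by exact_mod_cast hpud) (by exact_mod_cast hxd) hpu
      have hur : u ≠ T.root := fun h => root_not_mem_desc hT he₁ (h ▸ hud)
      have humem : u ∈ T.children x :=
        Finset.mem_filter.2 ⟨(mem_desc.1 hud).1, hur, hpux⟩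
      rw [(Finset.mem_filter.1 hxl).2] at humem
      exact absurd humem (Finset.notMem_empty u)
  exact mem_clade.2 ⟨Finset.mem_filter.2 ⟨hfxv, hchild⟩, hfxb⟩

/-- The neutrality relation between coordinates. -/
def Rel (T : PreTree V) (g₁ g₂ : ↥T.leaves × ↥T.edges) : Prop :=
  ∃ f : V → V, T.IsShapeIso (↑g₁.2) (↑g₂.2) f ∧ (↑g₁.1 : V) ∈ T.clade ↑g₁.2 ∧
    f ↑g₁.1 = (↑g₂.1 : V)

lemma score_eq_subtype_sum (T : PreTree V) (ℓ : V → ℝ) (γ : V → V → ℝ) (x : V) :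
    T.score ℓ γ x = ∑ e : ↥T.edges, γ x ↑e * ℓ ↑e := by
  rw [score, ← Finset.sum_coe_sort]

lemma PD_nonneg (T : PreTree V) {ℓ : V → ℝ} (hℓ : ∀ e, 0 ≤ ℓ e) (Y : Finset V) :
    0 ≤ T.PD ℓ Y :=
  Finset.sum_nonneg fun e _ => hℓ e

lemma score_nonneg {ℓ : V → ℝ} (hℓ : ∀ e, 0 ≤ ℓ e) {γ : V → V → ℝ}
    (hγ : T.IsDivIndex ℓ γ) (x : V) : 0 ≤ T.score ℓ γ x :=
  Finset.sum_nonneg fun e _ => mul_nonneg (hγ.1 x e) (hℓ e)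

lemma score_le_PD {ℓ : V → ℝ} (hℓ : ∀ e, 0 ≤ ℓ e) {γ : V → V → ℝ}
    (hγ : T.IsDivIndex ℓ γ) {x : V} (hx : x ∈ T.leaves) :
    T.score ℓ γ x ≤ T.PD ℓ T.leaves := by
  rw [← hγ.2.2.2]
  exact Finset.single_le_sum (fun y _ => score_nonneg hℓ hγ y) hx

end PreTree

section MainConstruction

open PreTree

variable {V : Type*}

theorem indexScores_isPolyhedron (T : PreTree V) (hT : T.IsTree) (ℓ : V → ℝ) :
    IsPolyhedron (PreTree.indexScores T ℓ) := by
  classical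
  set L := ↥T.leaves
  set E := ↥T.edges
  set G := L × E
  set β := L ⊕ G with hβ
  set Q : Set (β → ℝ) := {z |
      (∀ g : G, 0 ≤ z (Sum.inr g)) ∧
      (∀ g : G, (↑g.1 : V) ∉ T.clade ↑g.2 → z (Sum.inr g) = 0) ∧
      (∀ g₁ g₂ : G, T.Rel g₁ g₂ → z (Sum.inr g₁) = z (Sum.inr g₂)) ∧
      (∑ g : G, ℓ (↑g.2 : V) * z (Sum.inr g) = T.PD ℓ T.leaves) ∧
      (∀ x : L, z (Sum.inl x) = ∑ e : E, ℓ (↑e : V) * z (Sum.inr (x, e)))} with hQ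
  have hQpoly : IsPolyhedron Q := by
    have hQeq : Q =
        ((⋂ g : G, {z : β → ℝ | 0 ≤ z (Sum.inr g)}) ∩
        (⋂ g : G, if (↑g.1 : V) ∈ T.clade ↑g.2 then Set.univ
          else {z : β → ℝ | z (Sum.inr g) = 0})) ∩
        ((⋂ p : G × G, if T.Rel p.1 p.2
          then {z : β → ℝ | z (Sum.inr p.1) = z (Sum.inr p.2)} else Set.univ) ∩
        {z : β → ℝ | ∑ k, (Sum.elim (fun _ : L => (0:ℝ)) fun g : G => ℓ (↑g.2 : V)) k * z k
          = T.PD ℓ T.leaves}) ∩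
        (⋂ x : L, {z : β → ℝ | ∑ k, (Sum.elim (fun y : L => if y = x then (1:ℝ) else 0)
          fun g : G => if g.1 = x then -(ℓ (↑g.2 : V)) else 0) k * z k = 0}) := by
      ext z
      rw [hQ]
      simp only [Set.mem_setOf_eq, Set.mem_inter_iff, Set.mem_iInter]
      have e4 : ∑ k, (Sum.elim (fun _ : L => (0:ℝ)) fun g : G => ℓ (↑g.2 : V)) k * z k
          = ∑ g : G, ℓ (↑g.2 : V) * z (Sum.inr g) := by
        rw [Fintype.sum_sum_type]
        simp
      have e5 : ∀ x : L, ∑ k, (Sum.elim (fun y : L => if y = x then (1:ℝ) else 0)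
          fun g : G => if g.1 = x then -(ℓ (↑g.2 : V)) else 0) k * z k
          = z (Sum.inl x) - ∑ e : E, ℓ (↑e : V) * z (Sum.inr (x, e)) := by
        intro x
        rw [Fintype.sum_sum_type]
        have ha : ∑ y : L, (Sum.elim (fun y : L => if y = x then (1:ℝ) else 0)
            (fun g : G => if g.1 = x then -(ℓ (↑g.2 : V)) else 0)) (Sum.inl y) * z (Sum.inl y)
            = z (Sum.inl x) := by
          simp [ite_mul, Finset.sum_ite_eq']
          rw [Finset.sum_eq_single x] <;> simp_all
        have hb : ∑ g : G, (Sum.elim (fun y : L => if y = x then (1:ℝ) else 0)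
            (fun g : G => if g.1 = x then -(ℓ (↑g.2 : V)) else 0)) (Sum.inr g) * z (Sum.inr g)
            = -∑ e : E, ℓ (↑e : V) * z (Sum.inr (x, e)) := by
          rw [Fintype.sum_prod_type]
          simp only [Sum.elim_inr, ite_mul, zero_mul, neg_mul]
          rw [Finset.sum_congr rfl (fun y _ => Finset.sum_ite_irrel (y = x) _ _ _)]
          simp only [Finset.sum_const_zero]
          rw [Fintype.sum_ite_eq']
          simp [Finset.sum_neg_distrib]
        rw [ha, hb]
        ring
      constructor
      · rintro ⟨h1, h2, h3, h4, h5⟩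
        refine ⟨⟨⟨h1, fun g => ?_⟩, fun p => ?_, by rw [e4]; exact h4⟩, fun x => ?_⟩
        · by_cases hg : (↑g.1 : V) ∈ T.clade ↑g.2
          · rw [if_pos hg]; trivial
          · rw [if_neg hg]; exact h2 g hg
        · by_cases hp : T.Rel p.1 p.2
          · rw [if_pos hp]; exact h3 p.1 p.2 hp
          · rw [if_neg hp]; trivial
        · rw [e5 x, h5 x]; ring
      · rintro ⟨⟨⟨h1, h2⟩, h3, h4⟩, h5⟩
        refine ⟨h1, fun g hg => ?_, fun g₁ g₂ hr => ?_, by rw [← e4]; exact h4, fun x => ?_⟩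
        · have := h2 g; rwa [if_neg hg] at this
        · have := h3 (g₁, g₂); rwa [if_pos hr] at this
        · have := h5 x; rw [e5 x] at this; linarith
    rw [hQeq]
    refine (IsPolyhedron.inter (IsPolyhedron.inter ?_ ?_) (IsPolyhedron.inter ?_ ?_)).inter ?_
    · exact isPolyhedron_iInter fun g => isPolyhedron_coord_nonneg _
    · exact isPolyhedron_iInter fun g => isPolyhedron_ite' _ (isPolyhedron_coord_eq_zero _)
    · exact isPolyhedron_iInter fun p => isPolyhedron_ite _ (isPolyhedron_coord_eq _ _)
    · exact isPolyhedron_eq _ _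
    · exact isPolyhedron_iInter fun x => isPolyhedron_eq _ _
  have hproj : PreTree.indexScores T ℓ
      = {s : L → ℝ | ∃ w ∈ Q, ∀ x : L, w (Sum.inl x) = s x} := by
    ext s
    constructor
    · rintro ⟨γ, hγ, hs⟩
      refine ⟨Sum.elim s (fun g => γ ↑g.1 ↑g.2), ?_, fun x => rfl⟩
      rw [hQ]
      refine ⟨fun g => hγ.1 _ _, fun g hg => hγ.2.1 _ _ g.2.2 hg, ?_, ?_, ?_⟩
      · rintro g₁ g₂ ⟨f, hf, hmem, hfx⟩
        have := hγ.2.2.1 ↑g₁.2 g₁.2.2 ↑g₂.2 g₂.2.2 f hf ↑g₁.1 hmem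
        simpa [hfx] using this
      · have key : ∑ g : G, ℓ (↑g.2 : V) * γ ↑g.1 ↑g.2 = T.PD ℓ T.leaves := by
          rw [Fintype.sum_prod_type]
          have hrow : ∀ x : L, ∑ e : E, ℓ (↑e : V) * γ ↑x ↑e = T.score ℓ γ ↑x := by
            intro x
            rw [score_eq_subtype_sum]
            exact Finset.sum_congr rfl fun e _ => mul_comm _ _
          rw [show (∑ x : L, ∑ e : E, ℓ (↑e : V) * γ ↑x ↑e) = ∑ x : L, T.score ℓ γ ↑x
            from Finset.sum_congr rfl fun x _ => hrow x]
          rw [Finset.sum_coe_sort]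
          exact hγ.2.2.2
        simpa using key
      · intro x
        rw [Sum.elim_inl, hs x, score_eq_subtype_sum]
        exact Finset.sum_congr rfl fun e _ => mul_comm _ _
    · rintro ⟨w, hwQ, hw⟩
      rw [hQ] at hwQ
      obtain ⟨h1, h2, h3, h4, h5⟩ := hwQ
      set γ : V → V → ℝ := fun x e =>
        if hx : x ∈ T.leaves then
          if he : e ∈ T.edges then w (Sum.inr (⟨x, hx⟩, ⟨e, he⟩)) else 0
        else 0 with hγdef
      have hγval : ∀ g : G, γ ↑g.1 ↑g.2 = w (Sum.inr g) := by
        rintro ⟨⟨x, hx⟩, ⟨e, he⟩⟩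
        show (if hx' : x ∈ T.leaves then if he' : e ∈ T.edges
          then w (Sum.inr (⟨x, hx'⟩, ⟨e, he'⟩)) else 0 else 0) = _
        rw [dif_pos hx, dif_pos he]
      have hscore : ∀ x : L, T.score ℓ γ ↑x = w (Sum.inl x) := by
        intro x
        rw [score_eq_subtype_sum, h5 x]
        refine Finset.sum_congr rfl fun e _ => ?_
        rw [hγval (x, e)]
        exact mul_comm _ _
      refine ⟨γ, ⟨?_, ?_, ?_, ?_⟩, fun x => by rw [hscore x, hw x]⟩
      · intro x e
        show (0:ℝ) ≤ if hx' : x ∈ T.leaves then if he' : e ∈ T.edges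
          then w (Sum.inr (⟨x, hx'⟩, ⟨e, he'⟩)) else 0 else 0
        by_cases hxl : x ∈ T.leaves
        · rw [dif_pos hxl]
          by_cases hel : e ∈ T.edges
          · rw [dif_pos hel]; exact h1 _
          · rw [dif_neg hel]
        · rw [dif_neg hxl]
      · intro x e he hx
        show (if hx' : x ∈ T.leaves then if he' : e ∈ T.edges
          then w (Sum.inr (⟨x, hx'⟩, ⟨e, he'⟩)) else 0 else 0) = 0
        by_cases hxl : x ∈ T.leaves
        · rw [dif_pos hxl, dif_pos he]
          exact h2 _ hx
        · rw [dif_neg hxl]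
      · intro e₁ he₁ e₂ he₂ f hf x hx
        have hxl : x ∈ T.leaves := (mem_clade.1 hx).1
        have hfx : f x ∈ T.clade e₂ := hf.map_clade hT he₁ he₂ hx
        have hfxl : f x ∈ T.leaves := (mem_clade.1 hfx).1
        have := h3 (⟨x, hxl⟩, ⟨e₁, he₁⟩) (⟨f x, hfxl⟩, ⟨e₂, he₂⟩) ⟨f, hf, hx, rfl⟩
        rw [← hγval ((⟨x, hxl⟩, ⟨e₁, he₁⟩) : G), ← hγval ((⟨f x, hfxl⟩, ⟨e₂, he₂⟩) : G)] at this
        exact this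
      · rw [← h4, ← Finset.sum_coe_sort T.leaves]
        rw [Fintype.sum_prod_type]
        refine Finset.sum_congr rfl fun x _ => ?_
        rw [score_eq_subtype_sum]
        refine Finset.sum_congr rfl fun e _ => ?_
        rw [hγval (x, e)]
        exact mul_comm _ _
  rw [hproj]
  exact hQpoly.proj

end MainConstruction
/-- For a rooted binary phylogenetic `X`-tree `(T,ℓ)`, the set
`P(T,ℓ) = {(φ(x₁),…,φ(xₙ)) : φ a diversity index of (T,ℓ)}` is a polytope in `ℝⁿ`
(a bounded intersection of finitely many closed half-spaces), and each coordinate admits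
non-negative lower and upper bounds `LB(x,T)` and `UB(x,T)` valid for every diversity index. -/
theorem indexScores_polytope {V : Type*} (T : PreTree V) (hT : T.IsBinaryTree)
    (ℓ : V → ℝ) (hℓ : ∀ e, 0 ≤ ℓ e) :
    (∃ (m : ℕ) (a : Fin m → (↥T.leaves → ℝ)) (b : Fin m → ℝ),
        PreTree.indexScores T ℓ =
          ⋂ i : Fin m, {s : ↥T.leaves → ℝ | ∑ x : ↥T.leaves, a i x * s x ≤ b i}) ∧
    Bornology.IsBounded (PreTree.indexScores T ℓ) ∧
    (∀ x ∈ T.leaves, ∃ LB UB : ℝ, 0 ≤ LB ∧ 0 ≤ UB ∧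
      ∀ γ : V → V → ℝ, T.IsDivIndex ℓ γ →
        LB ≤ T.score ℓ γ x ∧ T.score ℓ γ x ≤ UB) := by
  classical
  obtain ⟨m, a, b, hab⟩ := indexScores_isPolyhedron T hT.1 ℓ
  have hbnd : ∀ s ∈ PreTree.indexScores T ℓ, ∀ x : ↥T.leaves,
      0 ≤ s x ∧ s x ≤ T.PD ℓ T.leaves := by
    rintro s ⟨γ, hγ, hs⟩ x
    rw [hs x]
    exact ⟨PreTree.score_nonneg hℓ hγ _, PreTree.score_le_PD hℓ hγ x.2⟩
  refine ⟨⟨m, a, b, hab⟩, ?_, ?_⟩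
  · refine (Metric.isBounded_closedBall (x := (0 : ↥T.leaves → ℝ))
      (r := T.PD ℓ T.leaves)).subset ?_
    intro s hs
    rw [Metric.mem_closedBall]
    rw [dist_pi_le_iff (PreTree.PD_nonneg T hℓ _)]
    intro x
    rw [Real.dist_eq, abs_le]
    obtain ⟨h1, h2⟩ := hbnd s hs x
    constructor <;> simp <;> linarith [PreTree.PD_nonneg T hℓ T.leaves]
  · intro x hx
    refine ⟨0, T.PD ℓ T.leaves, le_refl 0, PreTree.PD_nonneg T hℓ _, fun γ hγ => ?_⟩
    exact ⟨PreTree.score_nonneg hℓ hγ x, PreTree.score_le_PD hℓ hγ hx⟩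
end

section
/- Let (T,ℓ) be a rooted binary phylogenetic X-tree, let γ be the coefficients of a diversity index of (T,ℓ) satisfying the allocation property, and let v be an internal vertex of T. Then the restriction of γ to the taxa X[v] and the edges of the pendant subtree T[v] defines a diversity index of (T[v], ℓ): the restricted coefficients are non-negative, satisfy descent, neutrality and the allocation property on T[v], and Σ_{x∈X[v]} Σ_{e∈E(T[v])} γ(x,e)·ℓ(e) = PD_{(T[v],ℓ)}(X[v]). -/
open scoped Classical

namespace PreTree

variable {V : Type*}

/-- The pendant subtree `T[v]` of `T`, rooted at `v`. -/
noncomputable def subtree (T : PreTree V) (v : V) : PreTree V where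
  verts := T.verts.filter fun w => T.below w v
  root := v
  par := fun w => if w = v then v else T.par w

end PreTree

namespace PreTree

variable {V : Type*} {T : PreTree V}

lemma below_refl' (x : V) : T.below x x := ⟨0, rfl⟩

lemma below_trans' {x y z : V} (h1 : T.below x y) (h2 : T.below y z) : T.below x z := by
  obtain ⟨m, hm⟩ := h1; obtain ⟨n, hn⟩ := h2
  exact ⟨n + m, by rw [Function.iterate_add_apply, hm, hn]⟩

lemma root_iterate (hT : T.IsTree) (n : ℕ) : T.par^[n] T.root = T.root :=
  Function.iterate_fixed hT.2.2.1 n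

lemma below_antisymm' (hT : T.IsTree) {a b : V} (ha : a ∈ T.verts)
    (h1 : T.below a b) (h2 : T.below b a) : a = b := by
  obtain ⟨p, hp⟩ := h1; obtain ⟨q, hq⟩ := h2
  rcases Nat.eq_zero_or_pos (q + p) with h | h
  · have hp0 : p = 0 := by omega
    rw [hp0] at hp; exact hp
  · obtain ⟨N, hN⟩ := hT.2.2.2 a ha
    have hfix : T.par^[q + p] a = a := by
      rw [Function.iterate_add_apply, hp, hq]
    have hmul : T.par^[(q + p) * N] a = a := by
      rw [Function.iterate_mul]; exact Function.iterate_fixed hfix N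
    have haroot : a = T.root := by
      rw [show (q + p) * N = ((q + p) * N - N) + N by
          have : N ≤ (q + p) * N := Nat.le_mul_of_pos_left N h
          omega,
        Function.iterate_add_apply, hN, root_iterate hT] at hmul
      exact hmul.symm
    have hbroot : b = T.root := by rw [← hp, haroot, root_iterate hT]
    rw [haroot, hbroot]

lemma par_eq_self' (hT : T.IsTree) {a : V} (ha : a ∈ T.verts) (h : T.par a = a) :
    a = T.root := by
  obtain ⟨N, hN⟩ := hT.2.2.2 a ha
  rw [Function.iterate_fixed h N] at hN; exact hN

lemma below_par' {a v : V} (h : T.below a v) (hne : a ≠ v) : T.below (T.par a) v := by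
  obtain ⟨n, hn⟩ := h
  cases n with
  | zero => exact absurd hn hne
  | succ m => exact ⟨m, by rw [← Function.iterate_succ_apply]; exact hn⟩

lemma sub_par_below {v : V} (n : ℕ) (x : V) (hx : T.below x v) :
    T.below x ((T.subtree v).par^[n] x) ∧ T.below ((T.subtree v).par^[n] x) v := by
  induction n with
  | zero => exact ⟨below_refl' x, hx⟩
  | succ m ih =>
    rw [Function.iterate_succ_apply']
    set y := (T.subtree v).par^[m] x with hy
    by_cases hyv : y = v
    · have hpv : (T.subtree v).par y = v := by simp [subtree, hyv]
      rw [hpv]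
      exact ⟨hx, below_refl' v⟩
    · have hpar : (T.subtree v).par y = T.par y := by simp [subtree, hyv]
      rw [hpar]
      obtain ⟨m', hm'⟩ := ih.1
      exact ⟨⟨m' + 1, by rw [Function.iterate_succ_apply', hm']⟩, below_par' ih.2 hyv⟩

lemma below_of_sub_below {v x w : V} (hx : T.below x v)
    (h : (T.subtree v).below x w) : T.below x w ∧ T.below w v := by
  obtain ⟨n, hn⟩ := h
  have := sub_par_below (T := T) (v := v) n x hx
  rw [hn] at this; exact this

lemma sub_below_of_below (hT : T.IsTree) {v w : V} :
    ∀ n (x : V), x ∈ T.verts → T.below w v → T.par^[n] x = w →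
      (T.subtree v).below x w := by
  intro n
  induction n with
  | zero =>
    intro x _ _ h
    exact h ▸ below_refl' x
  | succ m ih =>
    intro x hxv hwv hn
    by_cases hxeq : x = v
    · have hbw : T.below x w := ⟨m + 1, hn⟩
      have hwx : T.below w x := hxeq ▸ hwv
      have hxw : x = w := below_antisymm' hT hxv hbw hwx
      exact hxw ▸ below_refl' x
    · have hbxw : T.below x w := ⟨m + 1, hn⟩
      have hbxv : T.below x v := below_trans' hbxw hwv
      have hpar : (T.subtree v).par x = T.par x := by simp [subtree, hxeq]
      have hpx : T.par x ∈ T.verts := hT.2.1 x hxv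
      have hm : T.par^[m] (T.par x) = w := by
        rw [← Function.iterate_succ_apply]; exact hn
      obtain ⟨k, hk⟩ := ih (T.par x) hpx hwv hm
      exact ⟨k + 1, by rw [Function.iterate_succ_apply, hpar, hk]⟩

lemma mem_sub_edges {v e : V} :
    e ∈ (T.subtree v).edges ↔ e ≠ v ∧ e ∈ T.verts ∧ T.below e v := by
  simp [edges, subtree, Finset.mem_erase, Finset.mem_filter, and_assoc]

lemma sub_edges_subset (hT : T.IsTree) {v : V} :
    (T.subtree v).edges ⊆ T.edges := by
  intro e he
  rw [mem_sub_edges] at he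
  obtain ⟨hev, heV, hbel⟩ := he
  rw [edges, Finset.mem_erase]
  refine ⟨?_, heV⟩
  intro h
  subst h
  obtain ⟨n, hn⟩ := hbel
  rw [root_iterate hT] at hn
  exact hev hn

lemma sub_children (hT : T.IsTree) {v u : V} (hu : T.below u v) :
    (T.subtree v).children u = T.children u := by
  ext w
  simp only [children, Finset.mem_filter]; simp only [subtree, Finset.mem_filter]
  constructor
  · rintro ⟨⟨hwV, hwb⟩, hwv, hpar⟩
    rw [if_neg hwv] at hpar
    refine ⟨hwV, ?_, hpar⟩
    intro h
    subst h
    obtain ⟨n, hn⟩ := hwb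
    rw [root_iterate hT] at hn
    exact hwv hn
  · rintro ⟨hwV, hwr, hpar⟩
    have hwu : T.below w u := ⟨1, by simpa using hpar⟩
    have hwbv : T.below w v := below_trans' hwu hu
    have hwv : w ≠ v := by
      intro h
      subst h
      have hvu : w = u := below_antisymm' hT hwV hwu hu
      have : T.par w = w := by rw [hpar, hvu]
      exact hwr (par_eq_self' hT hwV this)
    exact ⟨⟨hwV, hwbv⟩, hwv, by rw [if_neg hwv]; exact hpar⟩

lemma mem_sub_verts {v x : V} :
    x ∈ (T.subtree v).verts ↔ x ∈ T.verts ∧ T.below x v := by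
  simp [subtree]

lemma sub_leaves (hT : T.IsTree) {v : V} : (T.subtree v).leaves = T.clade v := by
  ext x
  simp only [leaves, clade, Finset.mem_filter, mem_sub_verts]
  constructor
  · rintro ⟨⟨hxV, hxb⟩, hch⟩
    rw [sub_children hT hxb] at hch
    exact ⟨⟨hxV, hch⟩, hxb⟩
  · rintro ⟨⟨hxV, hch⟩, hxb⟩
    refine ⟨⟨hxV, hxb⟩, ?_⟩
    rw [sub_children hT hxb]; exact hch

lemma sub_clade (hT : T.IsTree) {v e : V} (he : e ∈ (T.subtree v).edges) :
    (T.subtree v).clade e = T.clade e := by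
  rw [mem_sub_edges] at he
  obtain ⟨hev, heV, hbel⟩ := he
  ext x
  rw [clade, clade, Finset.mem_filter, Finset.mem_filter, sub_leaves hT]
  constructor
  · rintro ⟨hxcl, hxb⟩
    rw [clade, Finset.mem_filter] at hxcl
    exact ⟨hxcl.1, (below_of_sub_below hxcl.2 hxb).1⟩
  · rintro ⟨hxl, hxb⟩
    have hxV : x ∈ T.verts := (Finset.mem_filter.mp hxl).1
    have hxv : T.below x v := below_trans' hxb hbel
    obtain ⟨n, hn⟩ := hxb
    exact ⟨by rw [clade, Finset.mem_filter]; exact ⟨hxl, hxv⟩,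
      sub_below_of_below hT n x hxV hbel hn⟩

lemma sub_desc (hT : T.IsTree) {v w : V} (hwv : T.below w v) :
    (T.subtree v).desc w = T.desc w := by
  ext u
  simp only [desc, Finset.mem_filter]; simp only [subtree, Finset.mem_filter]
  constructor
  · rintro ⟨⟨huV, hub⟩, husb⟩
    exact ⟨huV, (below_of_sub_below hub husb).1⟩
  · rintro ⟨huV, hub⟩
    obtain ⟨n, hn⟩ := hub
    exact ⟨⟨huV, below_trans' ⟨n, hn⟩ hwv⟩, sub_below_of_below hT n u huV hwv hn⟩

lemma sub_shapeIso (hT : T.IsTree) {v e₁ e₂ : V} (f : V → V)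
    (h1 : e₁ ∈ (T.subtree v).edges) (h2 : e₂ ∈ (T.subtree v).edges)
    (hiso : (T.subtree v).IsShapeIso e₁ e₂ f) : T.IsShapeIso e₁ e₂ f := by
  rw [mem_sub_edges] at h1 h2
  obtain ⟨h1v, h1V, h1b⟩ := h1
  obtain ⟨h2v, h2V, h2b⟩ := h2
  obtain ⟨hfe, hbij, hpar⟩ := hiso
  rw [sub_desc hT h1b, sub_desc hT h2b] at hbij
  rw [sub_desc hT h1b] at hpar
  refine ⟨hfe, hbij, fun w hw hwne => ?_⟩
  have hw' := hpar w hw hwne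
  have hwb : T.below w e₁ := (Finset.mem_filter.mp hw).2
  have hwnev : w ≠ v := by
    intro h
    subst h
    exact h1v (below_antisymm' hT h1V h1b hwb)
  have hfw : f w ∈ T.desc e₂ := by
    have := hbij.1 (Finset.mem_coe.mpr hw)
    exact Finset.mem_coe.mp this
  have hfwb : T.below (f w) e₂ := (Finset.mem_filter.mp hfw).2
  have hfwnev : f w ≠ v := by
    intro h
    rw [h] at hfwb
    exact h2v (below_antisymm' hT h2V h2b hfwb)
  have hswp : (T.subtree v).par w = T.par w := by simp [subtree, hwnev]
  have hsfp : (T.subtree v).par (f w) = T.par (f w) := by simp [subtree, hfwnev]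
  rw [hswp, hsfp] at hw'
  exact hw'

end PreTree

/-- For a diversity index of `(T,ℓ)` with the allocation property and an
internal vertex `v`, the restriction of its coefficients to the pendant subtree `T[v]` defines
a diversity index of `(T[v],ℓ)`: non-negativity, descent, neutrality and the allocation property
hold on `T[v]`, and `∑_{x∈X[v]} ∑_{e∈E(T[v])} γ(x,e)·ℓ(e) = PD_{(T[v],ℓ)}(X[v])`. -/
theorem restriction_isDivIndex {V : Type*} (T : PreTree V) (hT : T.IsBinaryTree)
    (ℓ : V → ℝ) (hℓ : ∀ e, 0 ≤ ℓ e) (v : V) (hv : v ∈ T.verts)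
    (hint : T.children v ≠ ∅) (γ : V → V → ℝ)
    (hγ : T.IsDivIndex ℓ γ) (halloc : T.Allocation γ) :
    (T.subtree v).IsDivIndex ℓ γ ∧ (T.subtree v).Allocation γ ∧
      ∑ x ∈ (T.subtree v).leaves, (T.subtree v).score ℓ γ x =
        ∑ e ∈ (T.subtree v).edges, ℓ e := by
  have hTt : T.IsTree := hT.1
  -- the clade of each subtree edge is contained in the subtree's leaf set
  have hclsub : ∀ e ∈ (T.subtree v).edges, T.clade e ⊆ (T.subtree v).leaves := by
    intro e he x hx
    rw [PreTree.sub_leaves hTt]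
    rw [PreTree.mem_sub_edges] at he
    rw [PreTree.clade, Finset.mem_filter] at hx ⊢
    exact ⟨hx.1, PreTree.below_trans' hx.2 he.2.2⟩
  -- allocation sums over the subtree's full leaf set
  have hsum : ∀ e ∈ (T.subtree v).edges, ∑ x ∈ (T.subtree v).leaves, γ x e = 1 := by
    intro e he
    have heT := PreTree.sub_edges_subset hTt he
    rw [← halloc e heT]
    refine (Finset.sum_subset (hclsub e he) ?_).symm
    intro x _ hxn
    exact hγ.2.1 x e heT hxn
  have hmain : ∑ x ∈ (T.subtree v).leaves, (T.subtree v).score ℓ γ x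
      = ∑ e ∈ (T.subtree v).edges, ℓ e := by
    unfold PreTree.score
    rw [Finset.sum_comm]
    refine Finset.sum_congr rfl fun e he => ?_
    rw [← Finset.sum_mul, hsum e he, one_mul]
  have hPD : (T.subtree v).PD ℓ (T.subtree v).leaves
      = ∑ e ∈ (T.subtree v).edges, ℓ e := by
    unfold PreTree.PD
    congr 1
    apply Finset.filter_true_of_mem
    intro e he
    have heT := PreTree.sub_edges_subset hTt he
    have h1 := halloc e heT
    obtain ⟨x, hx⟩ : (T.clade e).Nonempty := by
      by_contra h
      rw [Finset.not_nonempty_iff_eq_empty] at h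
      rw [h, Finset.sum_empty] at h1
      norm_num at h1
    refine ⟨x, hclsub e he hx, ?_⟩
    rw [PreTree.mem_sub_edges] at he
    rw [PreTree.clade, Finset.mem_filter, PreTree.leaves, Finset.mem_filter] at hx
    obtain ⟨n, hn⟩ := hx.2
    exact PreTree.sub_below_of_below hTt n x hx.1.1 he.2.2 hn
  refine ⟨⟨hγ.1, ?_, ?_, hmain.trans hPD.symm⟩, ?_, hmain⟩
  · -- descent
    intro x e he hx
    have heT := PreTree.sub_edges_subset hTt he
    rw [PreTree.sub_clade hTt he] at hx
    exact hγ.2.1 x e heT hx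
  · -- neutrality
    intro e₁ h1 e₂ h2 f hiso x hx
    rw [PreTree.sub_clade hTt h1] at hx
    exact hγ.2.2.1 e₁ (PreTree.sub_edges_subset hTt h1) e₂
      (PreTree.sub_edges_subset hTt h2) f (PreTree.sub_shapeIso hTt f h1 h2 hiso) x hx
  · -- allocation
    intro e he
    rw [PreTree.sub_clade hTt he]
    exact halloc e (PreTree.sub_edges_subset hTt he)
end

section
/- Let (T,ℓ) be a rooted binary phylogenetic X-tree and let e be an internal edge of T (both endpoints internal vertices), with T/e the tree obtained from T by collapsing e. Then for every edge e_j = (u_j,v_j) of T with e_j ≠ e, the leaf set below v_j is the same in T and in T/e, so the Fair Proportion coefficients satisfy γ^{T}(x,e_j) = γ^{T/e}(x,e_j) = 1/|X[v_j]| for all x ∈ X[v_j]. Consequently, the symmetrized Kullback–Leibler divergence between the Fair Proportion coefficient distributions on each edge of T/e is zero, and since the Fair Proportion index is the unique 1-compatible diversity index on both T and T/e, the degree of discontinuity satisfies dd(T,ℓ,κ,1,e) = 0 for every κ. -/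
open scoped Classical

namespace PreTree

variable {V : Type*}

/-- The tree `T/e` obtained from `T` by collapsing the edge with head `e`. -/
noncomputable def collapse (T : PreTree V) (e : V) : PreTree V where
  verts := T.verts.erase e
  root := T.root
  par := fun w => if T.par w = e then T.par e else T.par w

/-- `e` is an interior edge of `T`: its head is an internal vertex. -/
def interiorEdge (T : PreTree V) (e : V) : Prop := e ∈ T.edges ∧ T.children e ≠ ∅

/-- A diversity index with coefficients `γ` is `θ`-compatible on `(T,ℓ)`. -/
def Compatible (T : PreTree V) (ℓ : V → ℝ) (γ : V → V → ℝ) (θ : ℝ) : Prop :=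
  ∃ δ : V → ℝ, (∀ x ∈ T.leaves, 0 ≤ δ x) ∧
    (∀ e ∈ T.edges, ∀ x ∈ T.clade e, ∀ y ∈ T.clade e, x ≠ y →
        (γ x e - γ y e) * ℓ e ≤ δ x) ∧
    ∑ x ∈ T.leaves, δ x ≤ (1 - θ) * T.PD ℓ T.leaves

/-- The Fair Proportion coefficients: `γ(x,(u,v)) = 1/|X[v]|` for `x ∈ X[v]`, else `0`. -/
noncomputable def FPγ (T : PreTree V) : V → V → ℝ := fun x e =>
  if x ∈ T.clade e then 1 / ((T.clade e).card : ℝ) else 0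

/-- The symmetrized Kullback–Leibler divergence between the distributions `p` and `q`
supported on `S`. -/
noncomputable def symKL (S : Finset V) (p q : V → ℝ) : ℝ :=
  (1 / 2) * ∑ x ∈ S, (p x * Real.log (p x / q x) + q x * Real.log (q x / p x))

section Aux

variable {T : PreTree V}

lemma no_fixed (hT : T.IsTree) {v : V} (hv : v ∈ T.verts) (hne : v ≠ T.root)
    (hfix : T.par v = v) : False := by
  obtain ⟨n, hn⟩ := hT.2.2.2 v hv
  rw [Function.iterate_fixed hfix] at hn
  exact hne hn

lemma interior_facts (hT : T.IsTree) {e : V} (he : T.interiorEdge e) :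
    e ∈ T.verts ∧ e ≠ T.root ∧ T.par e ≠ e := by
  have h := Finset.mem_erase.mp he.1
  exact ⟨h.2, h.1, fun hfix => no_fixed hT h.2 h.1 hfix⟩

lemma collapse_edges (e : V) : (T.collapse e).edges = (T.verts.erase e).erase T.root := rfl

lemma collapse_edges_subset (e : V) : (T.collapse e).edges ⊆ T.edges := by
  intro v hv
  rw [collapse_edges] at hv
  have h := Finset.mem_erase.mp hv
  have h2 := Finset.mem_erase.mp h.2
  exact Finset.mem_erase.mpr ⟨h.1, h2.2⟩

lemma mem_collapse_edges {e ej : V} (h : ej ∈ (T.collapse e).edges) :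
    ej ≠ e ∧ ej ∈ T.edges := by
  rw [collapse_edges] at h
  have h1 := Finset.mem_erase.mp h
  have h2 := Finset.mem_erase.mp h1.2
  exact ⟨h2.1, Finset.mem_erase.mpr ⟨h1.1, h2.2⟩⟩

lemma collapse_par_eq {e x : V} (hpx : T.par x = e) : (T.collapse e).par x = T.par e := by
  simp [collapse, hpx]

lemma collapse_par_ne {e x : V} (hpx : T.par x ≠ e) : (T.collapse e).par x = T.par x := by
  simp [collapse, hpx]

lemma below_collapse_of_below {e ej : V} (hpe : T.par e ≠ e) (hej : ej ≠ e) :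
    ∀ n : ℕ, ∀ x, x ≠ e → T.par^[n] x = ej → (T.collapse e).below x ej := by
  intro n
  induction n using Nat.strong_induction_on with
  | _ n ih =>
    intro x hx h
    obtain _ | n := n
    · exact ⟨0, h⟩
    · rw [Function.iterate_succ_apply] at h
      by_cases hpx : T.par x = e
      · rw [hpx] at h
        obtain _ | m := n
        · simp only [Function.iterate_zero, id_eq] at h
          exact (hej h.symm).elim
        · rw [Function.iterate_succ_apply] at h
          obtain ⟨k, hk⟩ := ih m (by omega) (T.par e) hpe h
          exact ⟨k + 1, by rw [Function.iterate_succ_apply, collapse_par_eq hpx]; exact hk⟩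
      · obtain ⟨k, hk⟩ := ih n (by omega) (T.par x) hpx h
        exact ⟨k + 1, by rw [Function.iterate_succ_apply, collapse_par_ne hpx]; exact hk⟩

lemma below_of_below_collapse {e ej : V} (hpe : T.par e ≠ e) :
    ∀ m : ℕ, ∀ x, x ≠ e → (T.collapse e).par^[m] x = ej → T.below x ej := by
  intro m
  induction m with
  | zero => intro x _ h; exact ⟨0, h⟩
  | succ m ih =>
    intro x hx h
    rw [Function.iterate_succ_apply] at h
    by_cases hpx : T.par x = e
    · rw [collapse_par_eq hpx] at h
      obtain ⟨n, hn⟩ := ih (T.par e) hpe h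
      refine ⟨n + 2, ?_⟩
      show T.par^[n + 1 + 1] x = ej
      rw [Function.iterate_succ_apply, Function.iterate_succ_apply, hpx]
      exact hn
    · rw [collapse_par_ne hpx] at h
      obtain ⟨n, hn⟩ := ih (T.par x) hpx h
      exact ⟨n + 1, by rw [Function.iterate_succ_apply]; exact hn⟩

lemma collapse_leaves (hT : T.IsTree) {e : V} (he : T.interiorEdge e) :
    (T.collapse e).leaves = T.leaves := by
  obtain ⟨hev, her, hpe⟩ := interior_facts hT he
  ext v
  simp only [leaves, Finset.mem_filter,
    Finset.eq_empty_iff_forall_notMem, children]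
  simp only [collapse, Finset.mem_erase]
  constructor
  · rintro ⟨⟨hve, hvv⟩, hch⟩
    refine ⟨hvv, fun w hw => ?_⟩
    obtain ⟨hwv, hwr, hpw⟩ := hw
    by_cases hwe : w = e
    · obtain ⟨c, hc⟩ := Finset.nonempty_iff_ne_empty.mpr he.2
      rw [children, Finset.mem_filter] at hc
      obtain ⟨hcv, hcr, hpc⟩ := hc
      have hce : c ≠ e := fun h => hpe (h ▸ hpc)
      have hpev : T.par e = v := hwe ▸ hpw
      exact hch c ⟨⟨hce, hcv⟩, hcr, by rw [if_pos hpc]; exact hpev⟩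
    · have hne : T.par w ≠ e := by rw [hpw]; exact hve
      exact hch w ⟨⟨hwe, hwv⟩, hwr, by rw [if_neg hne]; exact hpw⟩
  · rintro ⟨hvv, hch⟩
    have hve : v ≠ e := by
      intro hveq; subst hveq
      obtain ⟨c, hc⟩ := Finset.nonempty_iff_ne_empty.mpr he.2
      rw [children, Finset.mem_filter] at hc
      exact hch c ⟨hc.1, hc.2.1, hc.2.2⟩
    refine ⟨⟨hve, hvv⟩, fun w hw => ?_⟩
    obtain ⟨⟨hwe, hwv⟩, hwr, hpw⟩ := hw
    by_cases hpwe : T.par w = e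
    · rw [if_pos hpwe] at hpw
      exact hch e ⟨hev, her, hpw⟩
    · rw [if_neg hpwe] at hpw
      exact hch w ⟨hwv, hwr, hpw⟩

lemma leaf_ne_interior (hT : T.IsTree) {e x : V} (he : T.interiorEdge e)
    (hx : x ∈ T.leaves) : x ≠ e := by
  intro h; subst h
  rw [leaves, Finset.mem_filter] at hx
  exact he.2 hx.2

lemma collapse_clade (hT : T.IsTree) {e : V} (he : T.interiorEdge e) :
    ∀ ej ∈ (T.collapse e).edges, (T.collapse e).clade ej = T.clade ej := by
  intro ej hej
  obtain ⟨hev, her, hpe⟩ := interior_facts hT he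
  have hejne : ej ≠ e := (mem_collapse_edges hej).1
  ext x
  simp only [clade, Finset.mem_filter, collapse_leaves hT he]
  constructor
  · rintro ⟨hx, n, hn⟩
    exact ⟨hx, below_of_below_collapse hpe n x (leaf_ne_interior hT he hx) hn⟩
  · rintro ⟨hx, n, hn⟩
    exact ⟨hx, below_collapse_of_below hpe hejne n x (leaf_ne_interior hT he hx) hn⟩

lemma compat_one_eq_FP {ℓ : V → ℝ} (hℓ : ∀ f ∈ T.edges, 0 < ℓ f)
    {γ : V → V → ℝ} (halloc : T.Allocation γ) (hcomp : T.Compatible ℓ γ 1) :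
    ∀ ej ∈ T.edges, ∀ x ∈ T.clade ej, γ x ej = 1 / ((T.clade ej).card : ℝ) := by
  obtain ⟨δ, hδ0, hδc, hδs⟩ := hcomp
  have hsum0 : ∑ x ∈ T.leaves, δ x = 0 :=
    le_antisymm (by simpa using hδs) (Finset.sum_nonneg hδ0)
  have hδz : ∀ x ∈ T.leaves, δ x = 0 :=
    (Finset.sum_eq_zero_iff_of_nonneg hδ0).mp hsum0
  intro ej hej x hx
  have hsub : T.clade ej ⊆ T.leaves := Finset.filter_subset _ _
  have hconst : ∀ y ∈ T.clade ej, γ y ej = γ x ej := by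
    intro y hy
    rcases eq_or_ne y x with rfl | hne
    · rfl
    · have h1 := hδc ej hej y hy x hx hne
      have h2 := hδc ej hej x hx y hy hne.symm
      rw [hδz y (hsub hy)] at h1
      rw [hδz x (hsub hx)] at h2
      have hl := hℓ ej hej
      nlinarith
  have hcard : ((T.clade ej).card : ℝ) * γ x ej = 1 := by
    have h := halloc ej hej
    rw [Finset.sum_congr rfl hconst, Finset.sum_const, nsmul_eq_mul] at h
    exact h
  have hpos : (0:ℝ) < (T.clade ej).card := by
    exact_mod_cast Finset.card_pos.mpr ⟨x, hx⟩
  rw [eq_div_iff hpos.ne']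
  linarith [hcard]

lemma symKL_eq_zero {S : Finset V} {p q : V → ℝ} (h : ∀ x ∈ S, p x = q x) :
    symKL S p q = 0 := by
  unfold symKL
  rw [Finset.sum_eq_zero, mul_zero]
  intro x hx
  rw [h x hx]
  by_cases h0 : q x = 0
  · simp [h0]
  · rw [div_self h0, Real.log_one, mul_zero, add_zero]

end Aux

end PreTree

/-- Collapsing an internal edge `e` leaves the clade below the head of every
other edge unchanged, so the Fair Proportion coefficients agree on `T` and `T/e`; hence the
symmetrized Kullback–Leibler divergence between the Fair Proportion coefficient distributions
on each edge of `T/e` vanishes, and — since the Fair Proportion index is the unique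
`1`-compatible diversity index on both `T` and `T/e` — the degree of discontinuity
`dd(T,ℓ,κ,1,e)`, computed from any `1`-compatible diversity indices on `(T,ℓ)` and `(T/e,ℓ)`,
is zero for every `κ`. -/
theorem degree_of_discontinuity_theta_one_eq_zero {V : Type*} (T : PreTree V)
    (hT : T.IsBinaryTree) (ℓ : V → ℝ) (hℓ : ∀ f ∈ T.edges, 0 < ℓ f)
    (e : V) (he : T.interiorEdge e) :
    (∀ ej ∈ (T.collapse e).edges, (T.collapse e).clade ej = T.clade ej) ∧
    (∀ ej ∈ (T.collapse e).edges, ∀ x ∈ T.clade ej,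
        PreTree.FPγ T x ej = 1 / ((T.clade ej).card : ℝ) ∧
        PreTree.FPγ (T.collapse e) x ej = PreTree.FPγ T x ej) ∧
    (∑ ej ∈ (T.collapse e).edges,
        PreTree.symKL ((T.collapse e).clade ej) (fun x => PreTree.FPγ T x ej)
          (fun x => PreTree.FPγ (T.collapse e) x ej) = 0) ∧
    (∀ γ₁ γ₂ : V → V → ℝ,
      T.IsDivIndex ℓ γ₁ → T.Allocation γ₁ → PreTree.Compatible T ℓ γ₁ 1 →
      (T.collapse e).IsDivIndex ℓ γ₂ → (T.collapse e).Allocation γ₂ →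
      PreTree.Compatible (T.collapse e) ℓ γ₂ 1 →
      ∑ ej ∈ (T.collapse e).edges,
          PreTree.symKL ((T.collapse e).clade ej) (fun x => γ₁ x ej)
            (fun x => γ₂ x ej) = 0) := by
  have htree : T.IsTree := hT.1
  have hclade := PreTree.collapse_clade htree he
  have hFP : ∀ ej ∈ (T.collapse e).edges, ∀ x ∈ T.clade ej,
      PreTree.FPγ T x ej = 1 / ((T.clade ej).card : ℝ) ∧
      PreTree.FPγ (T.collapse e) x ej = PreTree.FPγ T x ej := by
    intro ej hej x hx
    have hx' : x ∈ (T.collapse e).clade ej := by rw [hclade ej hej]; exact hx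
    constructor
    · rw [PreTree.FPγ, if_pos hx]
    · rw [PreTree.FPγ, PreTree.FPγ, if_pos hx, if_pos hx', hclade ej hej]
  refine ⟨hclade, hFP, ?_, ?_⟩
  · refine Finset.sum_eq_zero fun ej hej => PreTree.symKL_eq_zero fun x hx => ?_
    have hx' : x ∈ T.clade ej := by rw [← hclade ej hej]; exact hx
    exact ((hFP ej hej x hx').2).symm
  · intro γ₁ γ₂ _ halloc₁ hcomp₁ _ halloc₂ hcomp₂
    have hℓ' : ∀ f ∈ (T.collapse e).edges, 0 < ℓ f := fun f hf =>
      hℓ f (PreTree.collapse_edges_subset e hf)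
    refine Finset.sum_eq_zero fun ej hej => PreTree.symKL_eq_zero fun x hx => ?_
    have hx' : x ∈ T.clade ej := by rw [← hclade ej hej]; exact hx
    have h1 := PreTree.compat_one_eq_FP hℓ halloc₁ hcomp₁ ej
      (PreTree.collapse_edges_subset e hej) x hx'
    have h2 := PreTree.compat_one_eq_FP hℓ' halloc₂ hcomp₂ ej hej x hx
    rw [h1, h2, hclade ej hej]
end
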